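/- Let f: ℝ^p → ℝ be convex and L_f-smooth, let g: ℝ^p → ℝ ∪ {∞} be proper, convex and lsc, and let 0 < γ < 1/L_f. Then the DC envelope φ_γ = g^γ − (−f)^γ is a convex function on ℝ^p. -/

import Mathlib

open scoped InnerProductSpace
noncomputable section

/-- `ℝ^p` as a Euclidean space. -/
abbrev Euc (p : ℕ) := EuclideanSpace ℝ (Fin p)

variable {p : ℕ}

/-- `f : ℝ^p → ℝ ∪ {∞}` (modelled with `EReal` values never equal to `-∞`) is proper. -/
def ProperFun (f : Euc p → EReal) : Prop :=
  (∀ x, f x ≠ ⊥) ∧ (∃ x, f x ≠ ⊤)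

/-- Convexity for extended-real-valued functions. -/
def ConvexFun (f : Euc p → EReal) : Prop :=
  ∀ x y : Euc p, ∀ t : ℝ, 0 ≤ t → t ≤ 1 →
    f (t • x + (1 - t) • y) ≤ (t : EReal) * f x + ((1 - t : ℝ) : EReal) * f y

/-- The Moreau envelope `f^γ(x) = inf_w { f(w) + (1/(2γ))‖w − x‖² }`, as an extended real. -/
def moreau (f : Euc p → EReal) (γ : ℝ) (x : Euc p) : EReal :=
  ⨅ w : Euc p, f w + ((1/(2*γ) * ‖w - x‖^2 : ℝ) : EReal)

/-- The (real-valued) Moreau envelope. -/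
def moreauR (f : Euc p → EReal) (γ : ℝ) (x : Euc p) : ℝ := (moreau f γ x).toReal

/-! ### Auxiliary lemmas -/

theorem grad_line (f : Euc p → ℝ) (f' : Euc p → Euc p)
    (hf : ∀ x, HasGradientAt f (f' x) x) (x d : Euc p) (t : ℝ) :
    HasDerivAt (fun t : ℝ => f (x + t • d)) ⟪f' (x + t • d), d⟫_ℝ t := by
  have h1 : HasFDerivAt f (InnerProductSpace.toDual ℝ (Euc p) (f' (x + t • d))) (x + t • d) :=
    (hf _).hasFDerivAt
  have h2 : HasDerivAt (fun t : ℝ => x + t • d) d t := by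
    simpa using ((hasDerivAt_id t).smul_const d).const_add x
  have := h1.comp_hasDerivAt t h2
  simpa [InnerProductSpace.toDual_apply_apply, real_inner_comm, Function.comp_def] using this

theorem grad_ineq (f : Euc p → ℝ) (f' : Euc p → Euc p)
    (hf : ∀ x, HasGradientAt f (f' x) x)
    (hfconvex : ConvexOn ℝ Set.univ f) (x y : Euc p) :
    f x + ⟪f' x, y - x⟫_ℝ ≤ f y := by
  set d := y - x with hd
  have hφconv : ConvexOn ℝ Set.univ (fun t : ℝ => f (x + t • d)) := by
    have := hfconvex.comp_affineMap (AffineMap.lineMap x y : ℝ →ᵃ[ℝ] Euc p)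
    have he : ∀ t : ℝ, (AffineMap.lineMap x y : ℝ →ᵃ[ℝ] Euc p) t = x + t • d := by
      intro t; simp [AffineMap.lineMap_apply, hd]; abel
    have h2 : (fun t : ℝ => f (x + t • d)) = f ∘ (AffineMap.lineMap x y : ℝ →ᵃ[ℝ] Euc p) := by
      funext t; simp [he t]
    rw [h2]
    simpa using this
  have hs := hφconv.le_slope_of_hasDerivAt (Set.mem_univ (0:ℝ)) (Set.mem_univ (1:ℝ))
    one_pos (grad_line f f' hf x d 0)
  rw [slope_def_field] at hs
  simp only [zero_smul, add_zero, one_smul, sub_zero, div_one] at hs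
  have : x + d = y := by rw [hd]; abel
  rw [this] at hs
  linarith

theorem descent (f : Euc p → ℝ) (f' : Euc p → Euc p)
    (hf : ∀ x, HasGradientAt f (f' x) x)
    (Lf : ℝ) (hLf : 0 ≤ Lf) (hlip : LipschitzWith (Real.toNNReal Lf) f') (x y : Euc p) :
    f y ≤ f x + ⟪f' x, y - x⟫_ℝ + Lf / 2 * ‖y - x‖ ^ 2 := by
  set d := y - x with hd
  have hxy : x + (1:ℝ) • d = y := by rw [hd]; simp
  have hc : Continuous fun t : ℝ => ⟪f' (x + t • d), d⟫_ℝ := by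
    have : Continuous fun t : ℝ => x + t • d := by continuity
    exact (continuous_inner.comp ((hlip.continuous.comp this).prodMk continuous_const))
  have hig : IntervalIntegrable (fun t : ℝ => ⟪f' (x + t • d), d⟫_ℝ) MeasureTheory.volume 0 1 :=
    hc.intervalIntegrable 0 1
  have hftc : f y - f x = ∫ t in (0:ℝ)..1, ⟪f' (x + t • d), d⟫_ℝ := by
    have := intervalIntegral.integral_eq_sub_of_hasDerivAt
      (f := fun t : ℝ => f (x + t • d)) (f' := fun t : ℝ => ⟪f' (x + t • d), d⟫_ℝ)
      (a := 0) (b := 1) (fun t _ => grad_line f f' hf x d t) hig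
    simp only [zero_smul, add_zero] at this
    rw [this, hxy]
  have hbound : ∀ t ∈ Set.Icc (0:ℝ) 1,
      ⟪f' (x + t • d), d⟫_ℝ ≤ ⟪f' x, d⟫_ℝ + Lf * t * ‖d‖ ^ 2 := by
    intro t ht
    have h1 : ⟪f' (x + t • d) - f' x, d⟫_ℝ ≤ ‖f' (x + t • d) - f' x‖ * ‖d‖ :=
      real_inner_le_norm _ _
    have h2 : ‖f' (x + t • d) - f' x‖ ≤ Lf * (t * ‖d‖) := by
      have h0 := hlip.dist_le_mul (x + t • d) x
      rw [dist_eq_norm, dist_eq_norm] at h0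
      simp only [add_sub_cancel_left] at h0
      calc ‖f' (x + t • d) - f' x‖ ≤ (Real.toNNReal Lf : ℝ) * ‖t • d‖ := h0
        _ = Lf * (|t| * ‖d‖) := by rw [Real.coe_toNNReal _ hLf, norm_smul]; simp
        _ = Lf * (t * ‖d‖) := by rw [abs_of_nonneg ht.1]
    have h3 : ⟪f' (x + t • d), d⟫_ℝ = ⟪f' x, d⟫_ℝ + ⟪f' (x + t • d) - f' x, d⟫_ℝ := by
      rw [inner_sub_left]; ring
    have h4 : ‖f' (x + t • d) - f' x‖ * ‖d‖ ≤ Lf * (t * ‖d‖) * ‖d‖ :=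
      mul_le_mul_of_nonneg_right h2 (norm_nonneg _)
    nlinarith [norm_nonneg d]
  have hint : (∫ t in (0:ℝ)..1, ⟪f' (x + t • d), d⟫_ℝ)
      ≤ ∫ t in (0:ℝ)..1, (⟪f' x, d⟫_ℝ + Lf * t * ‖d‖ ^ 2) := by
    apply intervalIntegral.integral_mono_on zero_le_one hig
    · exact (Continuous.intervalIntegrable (by fun_prop) 0 1)
    · exact hbound
  have hval : (∫ t in (0:ℝ)..1, (⟪f' x, d⟫_ℝ + Lf * t * ‖d‖ ^ 2)) =
      ⟪f' x, d⟫_ℝ + Lf / 2 * ‖d‖ ^ 2 := by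
    rw [intervalIntegral.integral_add (intervalIntegrable_const)
      ((Continuous.intervalIntegrable (by fun_prop) 0 1))]
    simp only [intervalIntegral.integral_const, smul_eq_mul]
    have : (∫ t in (0:ℝ)..1, Lf * t * ‖d‖ ^ 2) = Lf * ‖d‖^2 * ∫ t in (0:ℝ)..1, t := by
      rw [← intervalIntegral.integral_const_mul]; congr 1; funext t; ring
    rw [this, integral_id]; ring
  linarith [hftc ▸ hint.trans_eq hval]

theorem sqcomb (a b : Euc p) (t : ℝ) (h0 : 0 ≤ t) (h1 : t ≤ 1) :
    ‖t • a + (1 - t) • b‖ ^ 2 ≤ t * ‖a‖ ^ 2 + (1 - t) * ‖b‖ ^ 2 := by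
  have h := norm_add_sq_real (t • a) ((1 - t) • b)
  have hi : ⟪t • a, (1 - t) • b⟫_ℝ = t * ((1 - t) * ⟪a, b⟫_ℝ) := by
    rw [real_inner_smul_left, real_inner_smul_right]
  have hab : ⟪a, b⟫_ℝ ≤ ‖a‖ * ‖b‖ := real_inner_le_norm a b
  have hna : ‖t • a‖ = t * ‖a‖ := by rw [norm_smul]; simp [abs_of_nonneg h0]
  have hnb : ‖(1 - t) • b‖ = (1 - t) * ‖b‖ := by
    rw [norm_smul]; simp [abs_of_nonneg (by linarith : (0:ℝ) ≤ 1 - t)]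
  rw [h, hi, hna, hnb]
  nlinarith [sq_nonneg (‖a‖ - ‖b‖), norm_nonneg a, norm_nonneg b,
    mul_nonneg h0 (by linarith : (0:ℝ) ≤ 1-t)]

theorem moreau_le_apply (g : Euc p → EReal) (γ : ℝ) (x w : Euc p) :
    moreau g γ x ≤ g w + ((1/(2*γ) * ‖w - x‖^2 : ℝ) : EReal) := iInf_le _ w

theorem extract (gw : EReal) (hbot : gw ≠ ⊥) (c M : ℝ)
    (h : gw + (c : EReal) < (M : EReal)) :
    ∃ a : ℝ, gw = (a : EReal) ∧ a + c < M := by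
  have htop : gw ≠ ⊤ := by
    intro he
    rw [he, EReal.top_add_coe] at h
    exact absurd (h.trans_le le_top) (lt_irrefl _)
  refine ⟨gw.toReal, (EReal.coe_toReal htop hbot).symm, ?_⟩
  rw [← EReal.coe_toReal htop hbot, ← EReal.coe_add, EReal.coe_lt_coe_iff] at h
  exact h

theorem bot_prop (g : Euc p → EReal) (hg_proper : ProperFun g) (hg_convex : ConvexFun g)
    (γ : ℝ) (hγ : 0 < γ) (s₀ : Euc p) (hbot : moreau g γ s₀ = ⊥) (s : Euc p) :
    moreau g γ s = ⊥ := by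
  obtain ⟨x₀, hx₀⟩ := hg_proper.2
  set r₀ : ℝ := (g x₀).toReal with hr₀
  have hgx₀ : g x₀ = (r₀ : EReal) := (EReal.coe_toReal hx₀ (hg_proper.1 x₀)).symm
  set e : Euc p := (1/2 : ℝ) • s₀ + (1/2 : ℝ) • x₀ - s with he
  have key : ∀ N : ℝ, moreau g γ s ≤ (N : EReal) := by
    intro N
    set M : ℝ := 2*N - r₀ - 8 * (1/(2*γ)) * ‖e‖^2 with hM
    have hlt : moreau g γ s₀ < (M : EReal) := by rw [hbot]; exact bot_lt_iff_ne_bot.2 (by simp)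
    rw [moreau, iInf_lt_iff] at hlt
    obtain ⟨w, hw⟩ := hlt
    obtain ⟨a, hga, haM⟩ := extract (g w) (hg_proper.1 w) _ _ hw
    set m : Euc p := (1/2 : ℝ) • w + (1/2 : ℝ) • x₀ with hm
    have hc : g m ≤ ((a/2 + r₀/2 : ℝ) : EReal) := by
      have hcv := hg_convex w x₀ (1/2) (by norm_num) (by norm_num)
      rw [hga, hgx₀, ← EReal.coe_mul, ← EReal.coe_mul, ← EReal.coe_add] at hcv
      have hmeq : (1/2 : ℝ) • w + (1 - 1/2 : ℝ) • x₀ = m := by rw [hm]; norm_num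
      rw [hmeq] at hcv
      exact hcv.trans (EReal.coe_le_coe_iff.2 (le_of_eq (by ring)))
    have hms : ‖m - s‖ ≤ ‖w - s₀‖/2 + ‖e‖ := by
      have : m - s = (1/2 : ℝ) • (w - s₀) + e := by
        rw [hm, he]; module
      rw [this]
      calc ‖(1/2 : ℝ) • (w - s₀) + e‖ ≤ ‖(1/2 : ℝ) • (w - s₀)‖ + ‖e‖ := norm_add_le _ _
        _ = ‖w - s₀‖/2 + ‖e‖ := by rw [norm_smul]; norm_num; ring
    have hreal : a/2 + r₀/2 + 1/(2*γ) * ‖m - s‖^2 ≤ N := by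
      set β := 1/(2*γ) with hβ
      have hβpos : 0 < β := by positivity
      set r := ‖w - s₀‖ with hr
      have hrpos : 0 ≤ r := norm_nonneg _
      have h5 : ‖m - s‖^2 ≤ r^2/2 + 2*‖e‖^2 := by
        nlinarith [sq_nonneg (r - 2*‖e‖), norm_nonneg (m - s), norm_nonneg e]
      nlinarith [mul_le_mul_of_nonneg_left h5 hβpos.le, haM, sq_nonneg r]
    calc moreau g γ s ≤ g m + ((1/(2*γ) * ‖m - s‖^2 : ℝ) : EReal) := moreau_le_apply g γ s m
      _ ≤ ((a/2 + r₀/2 : ℝ) : EReal) + ((1/(2*γ) * ‖m - s‖^2 : ℝ) : EReal) :=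
          add_le_add_left hc _
      _ = ((a/2 + r₀/2 + 1/(2*γ) * ‖m - s‖^2 : ℝ) : EReal) := by rw [← EReal.coe_add]
      _ ≤ (N : EReal) := EReal.coe_le_coe_iff.2 hreal
  by_contra hne
  rcases eq_or_ne (moreau g γ s) ⊤ with he' | he'
  · have := key 0; rw [he'] at this
    exact absurd (this.trans_lt (EReal.coe_lt_top 0)) (lt_irrefl _)
  · set r := (moreau g γ s).toReal
    have hco : moreau g γ s = (r : EReal) := (EReal.coe_toReal he' hne).symm
    have := key (r - 1)
    rw [hco, EReal.coe_le_coe_iff] at this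
    linarith

/-- A convenient constructor for `ConvexOn ℝ univ`. -/
theorem convexOn_of (D : Euc p → ℝ)
    (h : ∀ x y : Euc p, ∀ t : ℝ, 0 ≤ t → t ≤ 1 →
      D (t • x + (1 - t) • y) ≤ t * D x + (1 - t) * D y) :
    ConvexOn ℝ Set.univ D := by
  refine ⟨convex_univ, fun x _ y _ a b ha hb hab => ?_⟩
  have := h x y a ha (by linarith)
  rw [show (1 - a : ℝ) = b by linarith] at this
  simpa [smul_eq_mul] using this

/-- for convex `L_f`-smooth `f`, proper convex lsc `g` and `0 < γ < 1/L_f`,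
the DC envelope `φ_γ = g^γ − (−f)^γ` is convex. -/
theorem statement11
    (f : Euc p → ℝ) (f' : Euc p → Euc p)
    (hf : ∀ x, HasGradientAt f (f' x) x)
    (hfconvex : ConvexOn ℝ Set.univ f)
    (Lf : ℝ) (hLf : 0 ≤ Lf) (hlip : LipschitzWith (Real.toNNReal Lf) f')
    (g : Euc p → EReal)
    (hg_proper : ProperFun g) (hg_convex : ConvexFun g) (hg_lsc : LowerSemicontinuous g)
    (γ : ℝ) (hγ : 0 < γ) (hγL : γ * Lf < 1) :
    ConvexOn ℝ Set.univ
      (fun s => moreauR g γ s - moreauR (fun x => ((-f x : ℝ) : EReal)) γ s) := by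
  set nf : Euc p → EReal := fun x => ((-f x : ℝ) : EReal) with hnf
  set a : ℝ := 1/(2*γ) - Lf/2 with ha
  clear_value a
  have hapos : 0 < a := by
    have h2γ : (0:ℝ) < 2*γ := by positivity
    rw [ha, sub_pos, div_lt_div_iff₀ two_pos h2γ]
    nlinarith
  -- lower bound for the `nf` envelope
  have hnf_lb : ∀ s w : Euc p,
      -f s - ‖f' s‖^2/(4*a) ≤ -f w + 1/(2*γ) * ‖w - s‖^2 := by
    intro s w
    have hdes := descent f f' hf Lf hLf hlip s w
    have hin : ⟪f' s, w - s⟫_ℝ ≤ ‖f' s‖ * ‖w - s‖ := real_inner_le_norm _ _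
    set k : ℝ := ‖f' s‖^2/(4*a) with hk
    have hks : k * (4*a) = ‖f' s‖^2 := by rw [hk]; field_simp
    have hkey : 0 ≤ a * ‖w - s‖^2 - ‖f' s‖ * ‖w - s‖ + k := by
      nlinarith [sq_nonneg (2*a*‖w - s‖ - ‖f' s‖), hapos, hks]
    have h2γ : 1/(2*γ) = Lf/2 + a := by rw [ha]; ring
    rw [h2γ]
    nlinarith [hdes, hin, hkey]
  have hnf_fin : ∀ s : Euc p, moreau nf γ s = (((moreau nf γ s).toReal : ℝ) : EReal) := by
    intro s
    set B : ℝ := -f s - ‖f' s‖^2/(4*a) with hB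
    have hlow : (B : EReal) ≤ moreau nf γ s := by
      apply le_iInf
      intro w
      rw [hnf, ← EReal.coe_add]
      exact EReal.coe_le_coe_iff.2 (hnf_lb s w)
    have hup : moreau nf γ s ≤ ((-f s : ℝ) : EReal) := by
      have := moreau_le_apply nf γ s s
      simpa [hnf] using this
    have hnb : moreau nf γ s ≠ ⊥ := fun h => by
      rw [h] at hlow; exact EReal.coe_ne_bot _ (le_bot_iff.1 hlow)
    have hnt : moreau nf γ s ≠ ⊤ := fun h => by
      rw [h] at hup; exact EReal.coe_ne_top _ (top_le_iff.1 hup)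
    exact (EReal.coe_toReal hnt hnb).symm
  set T : Euc p → ℝ := fun s => (moreau nf γ s).toReal with hT
  -- pointwise bound for T
  have hTle : ∀ s w : Euc p, T s ≤ -f w + 1/(2*γ) * ‖w - s‖^2 := by
    intro s w
    have h := moreau_le_apply nf γ s w
    rw [hnf_fin s] at h
    rw [hnf] at h
    rw [← EReal.coe_add, EReal.coe_le_coe_iff] at h
    exact h
  -- concavity-type estimate for T (T is concave would be wrong; this is the superadditivity)
  have hTcomb : ∀ x y : Euc p, ∀ t : ℝ, 0 ≤ t → t ≤ 1 →
      t * T x + (1 - t) * T y ≤ T (t • x + (1 - t) • y) := by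
    intro x y t ht0 ht1
    set s := t • x + (1 - t) • y with hs
    rw [show T s = (moreau nf γ s).toReal from rfl]
    have : ((t * T x + (1 - t) * T y : ℝ) : EReal) ≤ moreau nf γ s := by
      apply le_iInf
      intro w
      rw [hnf, ← EReal.coe_add]
      apply EReal.coe_le_coe_iff.2
      have h1 := hTle x (w - s + x)
      have h2 := hTle y (w - s + y)
      have he1 : w - s + x - x = w - s := by abel
      have he2 : w - s + y - y = w - s := by abel
      rw [he1] at h1
      rw [he2] at h2
      have hfw : f w ≤ t * f (w - s + x) + (1 - t) * f (w - s + y) := by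
        have hcomb : t • (w - s + x) + (1 - t) • (w - s + y) = w := by
          rw [hs]; module
        have := hfconvex.2 (Set.mem_univ (w - s + x)) (Set.mem_univ (w - s + y))
          ht0 (by linarith : (0:ℝ) ≤ 1 - t) (by ring)
        rw [hcomb] at this
        simpa [smul_eq_mul] using this
      nlinarith [mul_le_mul_of_nonneg_left h1 ht0,
        mul_le_mul_of_nonneg_left h2 (by linarith : (0:ℝ) ≤ 1 - t)]
    rw [hnf_fin s, EReal.coe_le_coe_iff] at this
    exact this
  -- case analysis on whether g's envelope is ⊥ somewhere
  by_cases hcase : ∃ s₀, moreau g γ s₀ = ⊥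
  · obtain ⟨s₀, hs₀⟩ := hcase
    have hb : ∀ s, moreau g γ s = ⊥ := bot_prop g hg_proper hg_convex γ hγ s₀ hs₀
    have hfe : (fun s => moreauR g γ s - moreauR nf γ s) = fun s => 0 - T s := by
      funext s
      rw [moreauR, hb s]
      simp [moreauR, hT]
    rw [hfe]
    apply convexOn_of
    intro x y t ht0 ht1
    have := hTcomb x y t ht0 ht1
    linarith
  · push_neg at hcase
    -- g's envelope is finite everywhere
    obtain ⟨x₀, hx₀⟩ := hg_proper.2
    set r₀ : ℝ := (g x₀).toReal with hr₀
    have hgx₀ : g x₀ = (r₀ : EReal) := (EReal.coe_toReal hx₀ (hg_proper.1 x₀)).symm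
    have hg_fin : ∀ s : Euc p, moreau g γ s = (((moreau g γ s).toReal : ℝ) : EReal) := by
      intro s
      have hup : moreau g γ s ≤ ((r₀ + 1/(2*γ) * ‖x₀ - s‖^2 : ℝ) : EReal) := by
        have := moreau_le_apply g γ s x₀
        rwa [hgx₀, ← EReal.coe_add] at this
      have hnt : moreau g γ s ≠ ⊤ := fun h => by
        rw [h] at hup; exact EReal.coe_ne_top _ (top_le_iff.1 hup)
      exact (EReal.coe_toReal hnt (hcase s)).symm
    set G : Euc p → ℝ := fun s => (moreau g γ s).toReal with hG
    have hGcomb : ∀ x y : Euc p, ∀ t : ℝ, 0 ≤ t → t ≤ 1 →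
        G (t • x + (1 - t) • y) ≤ t * G x + (1 - t) * G y := by
      intro x y t ht0 ht1
      set s := t • x + (1 - t) • y with hs
      apply le_of_forall_pos_le_add
      intro ε hε
      have hx1 : moreau g γ x < ((G x + ε/2 : ℝ) : EReal) := by
        rw [hg_fin x, EReal.coe_lt_coe_iff]
        show G x < G x + ε/2
        linarith
      have hy1 : moreau g γ y < ((G y + ε/2 : ℝ) : EReal) := by
        rw [hg_fin y, EReal.coe_lt_coe_iff]
        show G y < G y + ε/2
        linarith
      rw [moreau, iInf_lt_iff] at hx1 hy1
      obtain ⟨w₁, hw₁⟩ := hx1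
      obtain ⟨w₂, hw₂⟩ := hy1
      obtain ⟨a₁, hga₁, h₁⟩ := extract (g w₁) (hg_proper.1 w₁) _ _ hw₁
      obtain ⟨a₂, hga₂, h₂⟩ := extract (g w₂) (hg_proper.1 w₂) _ _ hw₂
      set w : Euc p := t • w₁ + (1 - t) • w₂ with hw
      have hgw : g w ≤ ((t * a₁ + (1 - t) * a₂ : ℝ) : EReal) := by
        have := hg_convex w₁ w₂ t ht0 ht1
        rw [hga₁, hga₂, ← EReal.coe_mul, ← EReal.coe_mul, ← EReal.coe_add] at this
        exact this
      have hnorm : 1/(2*γ) * ‖w - s‖^2 ≤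
          t * (1/(2*γ) * ‖w₁ - x‖^2) + (1 - t) * (1/(2*γ) * ‖w₂ - y‖^2) := by
        have hws : w - s = t • (w₁ - x) + (1 - t) • (w₂ - y) := by
          rw [hw, hs]; module
        have := sqcomb (w₁ - x) (w₂ - y) t ht0 ht1
        rw [← hws] at this
        have hβ : (0:ℝ) ≤ 1/(2*γ) := by positivity
        calc 1/(2*γ) * ‖w - s‖^2 ≤ 1/(2*γ) * (t * ‖w₁ - x‖^2 + (1 - t) * ‖w₂ - y‖^2) :=
              mul_le_mul_of_nonneg_left this hβ
          _ = t * (1/(2*γ) * ‖w₁ - x‖^2) + (1 - t) * (1/(2*γ) * ‖w₂ - y‖^2) := by ring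
      have hle : moreau g γ s ≤ ((t * (G x + ε/2) + (1 - t) * (G y + ε/2) : ℝ) : EReal) := by
        calc moreau g γ s ≤ g w + ((1/(2*γ) * ‖w - s‖^2 : ℝ) : EReal) := moreau_le_apply g γ s w
          _ ≤ ((t * a₁ + (1 - t) * a₂ : ℝ) : EReal) + ((1/(2*γ) * ‖w - s‖^2 : ℝ) : EReal) :=
              add_le_add_left hgw _
          _ = ((t * a₁ + (1 - t) * a₂ + 1/(2*γ) * ‖w - s‖^2 : ℝ) : EReal) := by
              rw [← EReal.coe_add]
          _ ≤ ((t * (G x + ε/2) + (1 - t) * (G y + ε/2) : ℝ) : EReal) := by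
              apply EReal.coe_le_coe_iff.2
              nlinarith [mul_le_mul_of_nonneg_left h₁.le ht0,
                mul_le_mul_of_nonneg_left h₂.le (by linarith : (0:ℝ) ≤ 1 - t)]
      rw [hg_fin s, EReal.coe_le_coe_iff] at hle
      calc G s ≤ t * (G x + ε/2) + (1 - t) * (G y + ε/2) := hle
        _ = t * G x + (1 - t) * G y + ε/2 := by ring
        _ ≤ t * G x + (1 - t) * G y + ε := by linarith
    have hfe : (fun s => moreauR g γ s - moreauR nf γ s) = fun s => G s - T s := rfl
    rw [hfe]
    apply convexOn_of
    intro x y t ht0 ht1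
    have h1 := hGcomb x y t ht0 ht1
    have h2 := hTcomb x y t ht0 ht1
    linarith
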